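/- arXiv:2507.07647 — 7 statements merged into one kernel-verified Lean document; each statement's English description precedes it below -/
import Mathlib

section
/- Let σ ≥ 0, let γ be the Gaussian probability measure on ℝ with mean 0 and variance σ², let a ∈ ℝ, and for t ∈ ℝ define the vector h(t) = (sin t, −cos t) ∈ ℝ². Then the 2×2 second-moment matrix satisfies ∫ h(a+x)·h(a+x)ᵀ dγ(x) = exp(−2σ²)·h(a)·h(a)ᵀ + (1/2)·(1 − exp(−2σ²))·I₂, where I₂ is the 2×2 identity matrix. -/
open scoped NNReal ENNReal
open MeasureTheory ProbabilityTheory Real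

lemma integrable_cexp_gauss (v : ℝ≥0) (c d : ℝ) :
    Integrable (fun x : ℝ => Complex.exp ((d + c * x : ℝ) * Complex.I)) (gaussianReal 0 v) := by
  apply Integrable.mono' (integrable_const 1)
  · exact (Complex.continuous_exp.comp (by continuity)).aestronglyMeasurable
  · filter_upwards with x
    rw [Complex.norm_exp]
    simp

lemma gauss_cexp (v : ℝ≥0) (c d : ℝ) :
    ∫ x, Complex.exp ((d + c * x : ℝ) * Complex.I) ∂(gaussianReal 0 v) =
      (rexp (-(c ^ 2 * v) / 2) : ℂ) * Complex.exp ((d : ℝ) * Complex.I) := by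
  by_cases hv : v = 0
  · simp [hv, gaussianReal_zero_var]
  · have hvpos : (0:ℝ) < (v:ℝ) := by positivity
    have hb : (0:ℝ) < ((2 * (v:ℝ) : ℂ))⁻¹.re := by
      rw [show ((2 * (v:ℝ) : ℂ)) = ((2*(v:ℝ) : ℝ) : ℂ) by push_cast; ring,
        ← Complex.ofReal_inv, Complex.ofReal_re]
      positivity
    have hsq : (0:ℝ) < Real.sqrt (2 * π * v) := Real.sqrt_pos.mpr (by positivity)
    rw [gaussianReal_of_var_ne_zero 0 hv,
      (show gaussianPDF 0 v = fun x => ((gaussianPDFReal 0 v x).toNNReal : ℝ≥0∞) from rfl),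
      integral_withDensity_eq_integral_smul ((measurable_gaussianPDFReal 0 v).real_toNNReal)]
    calc ∫ x, (gaussianPDFReal 0 v x).toNNReal • Complex.exp ((d + c * x : ℝ) * Complex.I)
        = (↑(Real.sqrt (2*π*v)))⁻¹ * Complex.exp ((d:ℝ) * Complex.I) *
            ∫ x : ℝ, Complex.exp (Complex.I * (c:ℂ) * x) *
              Complex.exp (-((2 * (v:ℝ) : ℂ))⁻¹ * x^2) := by
          rw [← integral_const_mul]
          apply integral_congr_ae
          filter_upwards with x
          rw [NNReal.smul_def, Real.coe_toNNReal _ (gaussianPDFReal_nonneg 0 v x)]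
          rw [show ((d + c*x : ℝ) : ℂ) * Complex.I
              = (d:ℝ)*Complex.I + Complex.I*(c:ℂ)*(x:ℂ) by push_cast; ring, Complex.exp_add]
          simp only [gaussianPDFReal, Complex.real_smul]
          push_cast [Real.sqrt_eq_rpow]
          rw [show (-((x:ℂ) - 0)^2/(2*(v:ℝ))) = -((2 * (v:ℝ) : ℂ))⁻¹ * (x:ℂ)^2 by
            field_simp; ring]
          ring
      _ = (↑(Real.sqrt (2*π*v)))⁻¹ * Complex.exp ((d:ℝ) * Complex.I) *
            ((↑π / ((2 * (v:ℝ) : ℂ))⁻¹) ^ (1/2 : ℂ) *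
              Complex.exp (-(c:ℂ)^2 / (4 * ((2 * (v:ℝ) : ℂ))⁻¹))) := by
          rw [fourierIntegral_gaussian hb (c:ℂ)]
      _ = (rexp (-(c ^ 2 * v) / 2) : ℂ) * Complex.exp ((d : ℝ) * Complex.I) := by
          rw [show (↑π / ((2 * (v:ℝ) : ℂ))⁻¹) = ((2*π*(v:ℝ) : ℝ) : ℂ) by
              push_cast; field_simp,
            show (-(c:ℂ)^2 / (4 * ((2 * (v:ℝ) : ℂ))⁻¹)) = ((-(c^2 * (v:ℝ))/2 : ℝ) : ℂ) by
              push_cast; field_simp; ring,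
            show ((1:ℂ)/2) = ((1/2 : ℝ) : ℂ) by norm_num,
            ← Complex.ofReal_cpow (by positivity), ← Complex.ofReal_exp,
            ← Real.sqrt_eq_rpow]
          have h : ((Real.sqrt (2*π*(v:ℝ)) : ℝ) : ℂ) ≠ 0 := by exact_mod_cast hsq.ne'
          rw [show ((Real.sqrt (2*π*(v:ℝ)) : ℝ) : ℂ)⁻¹ * Complex.exp ((d:ℝ) * Complex.I) *
              (((Real.sqrt (2*π*(v:ℝ)) : ℝ) : ℂ) * (rexp (-(c ^ 2 * v) / 2) : ℂ)) =
              (((Real.sqrt (2*π*(v:ℝ)) : ℝ) : ℂ)⁻¹ * ((Real.sqrt (2*π*(v:ℝ)) : ℝ) : ℂ)) *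
              ((rexp (-(c ^ 2 * v) / 2) : ℂ) * Complex.exp ((d:ℝ) * Complex.I)) by ring,
            inv_mul_cancel₀ h, one_mul]

lemma gauss_cos (v : ℝ≥0) (c d : ℝ) :
    ∫ x, Real.cos (d + c * x) ∂(gaussianReal 0 v) =
      rexp (-(c ^ 2 * v) / 2) * Real.cos d := by
  have h2 := integral_re (integrable_cexp_gauss v c d)
  simp only [RCLike.re_to_complex, Complex.exp_ofReal_mul_I_re] at h2
  rw [h2, gauss_cexp]
  simp only [Complex.re_ofReal_mul, Complex.exp_ofReal_mul_I_re]

lemma gauss_sin (v : ℝ≥0) (c d : ℝ) :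
    ∫ x, Real.sin (d + c * x) ∂(gaussianReal 0 v) =
      rexp (-(c ^ 2 * v) / 2) * Real.sin d := by
  have h2 := integral_im (integrable_cexp_gauss v c d)
  simp only [RCLike.im_to_complex, Complex.exp_ofReal_mul_I_im] at h2
  rw [h2, gauss_cexp]
  simp only [Complex.im_ofReal_mul, Complex.exp_ofReal_mul_I_im]

lemma integrable_cos_gauss (v : ℝ≥0) (c d : ℝ) :
    Integrable (fun x : ℝ => Real.cos (d + c * x)) (gaussianReal 0 v) := by
  have := (integrable_cexp_gauss v c d).re
  simpa only [RCLike.re_to_complex, Complex.exp_ofReal_mul_I_re] using this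

lemma integrable_sin_gauss (v : ℝ≥0) (c d : ℝ) :
    Integrable (fun x : ℝ => Real.sin (d + c * x)) (gaussianReal 0 v) := by
  have := (integrable_cexp_gauss v c d).im
  simpa only [RCLike.im_to_complex, Complex.exp_ofReal_mul_I_im] using this


/-- The regressor vector `h t = (sin t, -cos t)` of the linearized bearing model. -/
noncomputable def bearingRegressor (t : ℝ) : Fin 2 → ℝ := ![Real.sin t, -Real.cos t]

/-- Key bias computation for the BELS estimator: for Gaussian noise `x` with mean `0` and
variance `σ²`, the second-moment matrix of the noisy regressor `h (a + x)` equals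
`exp (-2σ²) • h a (h a)ᵀ + Var(sin x) • I₂`, entrywise. -/
theorem gaussian_regressor_second_moment (σ : ℝ) (hσ : 0 ≤ σ) (a : ℝ) :
    ∀ i j : Fin 2,
      (∫ x, bearingRegressor (a + x) i * bearingRegressor (a + x) j
          ∂(gaussianReal 0 (σ ^ 2).toNNReal)) =
        Real.exp (-2 * σ ^ 2) * (bearingRegressor a i * bearingRegressor a j) +
          (1 / 2) * (1 - Real.exp (-2 * σ ^ 2)) * (1 : Matrix (Fin 2) (Fin 2) ℝ) i j := by
  set v : ℝ≥0 := (σ ^ 2).toNNReal with hvdef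
  have hv : ((σ ^ 2).toNNReal : ℝ) = σ ^ 2 := Real.coe_toNNReal _ (sq_nonneg σ)
  have hexp : (-(2 ^ 2 * (v : ℝ)) / 2) = -2 * σ ^ 2 := by rw [hvdef, hv]; ring
  have hcos : ∫ x, Real.cos (2 * a + 2 * x) ∂(gaussianReal 0 v) =
      rexp (-2 * σ ^ 2) * Real.cos (2 * a) := by
    have := gauss_cos v 2 (2 * a); rwa [hexp] at this
  have hsin : ∫ x, Real.sin (2 * a + 2 * x) ∂(gaussianReal 0 v) =
      rexp (-2 * σ ^ 2) * Real.sin (2 * a) := by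
    have := gauss_sin v 2 (2 * a); rwa [hexp] at this
  have hicos := integrable_cos_gauss v 2 (2 * a)
  have hc2 : Real.cos (2 * a) = 1 - 2 * Real.sin a ^ 2 := by
    have h1 := Real.cos_two_mul' a
    have h2 := Real.sin_sq_add_cos_sq a
    linarith
  have hc2' : Real.cos (2 * a) = 2 * Real.cos a ^ 2 - 1 := Real.cos_two_mul a
  have hs2 : Real.sin (2 * a) = 2 * Real.sin a * Real.cos a := Real.sin_two_mul a
  intro i j
  fin_cases i <;> fin_cases j <;>
    simp only [bearingRegressor, Fin.zero_eta, Fin.mk_one, Fin.isValue, Matrix.cons_val_zero,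
      Matrix.cons_val_one, Matrix.head_cons, Matrix.one_apply, Fin.mk.injEq, if_true, if_false,
      mul_neg, neg_mul, neg_neg, reduceIte]
  · -- (0,0) : sin * sin
    have key : ∀ x : ℝ, Real.sin (a + x) * Real.sin (a + x)
        = 1 / 2 - 1 / 2 * Real.cos (2 * a + 2 * x) := by
      intro x
      have h1 := Real.cos_two_mul' (a + x)
      have h2 := Real.sin_sq_add_cos_sq (a + x)
      have h3 : 2 * (a + x) = 2 * a + 2 * x := by ring
      rw [h3] at h1
      nlinarith
    simp_rw [key]
    rw [integral_sub (integrable_const _) (hicos.const_mul _), integral_const_mul, hcos,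
      integral_const]
    simp only [measure_univ, ENNReal.toReal_one, smul_eq_mul, one_mul]
    norm_num
    rw [hc2]; ring
  · -- (0,1) : sin * -cos
    have key : ∀ x : ℝ, -(Real.sin (a + x) * Real.cos (a + x))
        = -(1 / 2) * Real.sin (2 * a + 2 * x) := by
      intro x
      have h1 := Real.sin_two_mul (a + x)
      have h3 : 2 * (a + x) = 2 * a + 2 * x := by ring
      rw [h3] at h1
      linarith
    simp_rw [key]
    rw [integral_const_mul, hsin]
    norm_num
    rw [hs2]; ring
  · -- (1,0)
    have key : ∀ x : ℝ, -(Real.cos (a + x) * Real.sin (a + x))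
        = -(1 / 2) * Real.sin (2 * a + 2 * x) := by
      intro x
      have h1 := Real.sin_two_mul (a + x)
      have h3 : 2 * (a + x) = 2 * a + 2 * x := by ring
      rw [h3] at h1
      linarith
    simp_rw [key]
    rw [integral_const_mul, hsin]
    norm_num
    rw [hs2]; ring
  · -- (1,1) : cos * cos
    have key : ∀ x : ℝ, Real.cos (a + x) * Real.cos (a + x)
        = 1 / 2 + 1 / 2 * Real.cos (2 * a + 2 * x) := by
      intro x
      have h1 := Real.cos_two_mul (a + x)
      have h3 : 2 * (a + x) = 2 * a + 2 * x := by ring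
      rw [h3] at h1
      nlinarith
    simp_rw [key]
    rw [integral_add (integrable_const _) (hicos.const_mul _), integral_const_mul, hcos,
      integral_const]
    simp only [measure_univ, ENNReal.toReal_one, smul_eq_mul, one_mul]
    norm_num
    rw [hc2']; ring
end

section
/- Let C be a real symmetric positive semidefinite n×n matrix that is not invertible, let S be a real symmetric positive semidefinite n×n matrix, let v > 0, and suppose Q = C + v·S is positive definite. Then there exists a nonzero vector w ∈ ℝⁿ with S·w = (1/v)·(Q·w), and every real number λ admitting a nonzero x ∈ ℝⁿ with S·x = λ·(Q·x) satisfies λ ≤ 1/v. In other words, the largest generalized eigenvalue of the pair (S, Q) equals 1/v. -/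
open Matrix

/-- The principle behind the paper's noise-variance estimator: if `C` is symmetric
positive semidefinite and singular, `S` is symmetric positive semidefinite, `v > 0`,
and `Q = C + v • S` is positive definite, then the largest generalized eigenvalue of
the pair `(S, Q)` equals `1 / v`. -/
theorem largest_generalized_eigenvalue_eq_inv_var {n : ℕ}
    (C S : Matrix (Fin n) (Fin n) ℝ)
    (hC : C.PosSemidef) (hCsing : ¬IsUnit C.det) (hS : S.PosSemidef)
    (v : ℝ) (hv : 0 < v) (hQ : (C + v • S).PosDef) :
    (∃ w : Fin n → ℝ, w ≠ 0 ∧ S.mulVec w = (1 / v) • ((C + v • S).mulVec w)) ∧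
      ∀ (lam : ℝ) (x : Fin n → ℝ), x ≠ 0 →
        S.mulVec x = lam • ((C + v • S).mulVec x) → lam ≤ 1 / v := by
  constructor
  · have hdet : C.det = 0 := by
      by_contra h
      exact hCsing (isUnit_iff_ne_zero.mpr h)
    obtain ⟨w, hw0, hw⟩ := Matrix.exists_mulVec_eq_zero_iff.mpr hdet
    refine ⟨w, hw0, ?_⟩
    rw [add_mulVec, hw, smul_mulVec, zero_add, smul_smul,
      one_div_mul_cancel hv.ne', one_smul]
  · intro lam x hx hEq
    have hq : 0 < x ⬝ᵥ (C + v • S).mulVec x := by have := hQ.dotProduct_mulVec_pos hx; rwa [star_trivial] at this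
    have hc : 0 ≤ x ⬝ᵥ C.mulVec x := by have := hC.dotProduct_mulVec_nonneg x; rwa [star_trivial] at this
    have hs : x ⬝ᵥ S.mulVec x = lam * (x ⬝ᵥ (C + v • S).mulVec x) := by
      rw [hEq, dotProduct_smul, smul_eq_mul]
    have hsplit : x ⬝ᵥ (C + v • S).mulVec x
        = x ⬝ᵥ C.mulVec x + v * (x ⬝ᵥ S.mulVec x) := by
      rw [add_mulVec, dotProduct_add, smul_mulVec, dotProduct_smul, smul_eq_mul]
    rw [le_div_iff₀ hv]
    nlinarith [hq, hc, hs, hsplit, mul_pos hv hq]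
end

section
/- Let p⁰ ∈ ℝ² and let p₁, …, pₙ ∈ ℝ² with p_i ≠ p⁰ for each i, and suppose the points p₁, …, pₙ do not all lie on a single affine line. Then the 2×2 matrix I₂ − (1/n)·∑_{i=1}^n (p_i − p⁰)(p_i − p⁰)ᵀ/‖p_i − p⁰‖² is positive definite (in particular invertible). -/
open Matrix

lemma vecMulVec_mulVec' {m : ℕ} (u v x : Fin m → ℝ) :
    Matrix.vecMulVec u v *ᵥ x = (v ⬝ᵥ x) • u := by
  ext j
  simp only [Matrix.vecMulVec_apply, Matrix.mulVec, dotProduct, Pi.smul_apply,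
    smul_eq_mul, Finset.mul_sum]
  rw [Finset.sum_mul]
  exact Finset.sum_congr rfl fun k _ => by ring

lemma dotProduct_self_pos' {m : ℕ} {v : Fin m → ℝ} (hv : v ≠ 0) : 0 < v ⬝ᵥ v := by
  rcases (Finset.sum_nonneg fun i _ => mul_self_nonneg (v i) :
      (0:ℝ) ≤ v ⬝ᵥ v).lt_or_eq with h | h
  · exact h
  · exact absurd (dotProduct_self_eq_zero.mp h.symm) hv

lemma dot_sum {n : ℕ} (x : Fin 2 → ℝ) (f : Fin n → Fin 2 → ℝ) :
    x ⬝ᵥ (∑ i, f i) = ∑ i, x ⬝ᵥ f i := by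
  simp only [dotProduct, Finset.sum_apply, Finset.mul_sum]
  exact Finset.sum_comm

lemma quad_form_eval {n : ℕ} (u : Fin n → Fin 2 → ℝ) (x : Fin 2 → ℝ) :
    x ⬝ᵥ (((1 : Matrix (Fin 2) (Fin 2) ℝ) -
        (n : ℝ)⁻¹ • ∑ i, (u i ⬝ᵥ u i)⁻¹ • Matrix.vecMulVec (u i) (u i)) *ᵥ x) =
      x ⬝ᵥ x - (n : ℝ)⁻¹ * ∑ i, (u i ⬝ᵥ u i)⁻¹ * (u i ⬝ᵥ x) ^ 2 := by
  rw [Matrix.sub_mulVec, Matrix.one_mulVec, Matrix.smul_mulVec]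
  rw [show (∑ i, (u i ⬝ᵥ u i)⁻¹ • Matrix.vecMulVec (u i) (u i)) *ᵥ x
      = ∑ i, (u i ⬝ᵥ u i)⁻¹ • (Matrix.vecMulVec (u i) (u i) *ᵥ x) by
    induction (Finset.univ : Finset (Fin n)) using Finset.induction with
    | empty => simp [Matrix.mulVec]
    | insert _ _ h ih =>
        rw [Finset.sum_insert h, Finset.sum_insert h, Matrix.add_mulVec, ih,
          Matrix.smul_mulVec]]
  simp only [vecMulVec_mulVec', dotProduct_sub, dotProduct_smul]
  rw [dot_sum]
  congr 1
  rw [smul_eq_mul]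
  congr 1
  refine Finset.sum_congr rfl fun i _ => ?_
  simp only [smul_smul, dotProduct_smul, smul_eq_mul]
  have : x ⬝ᵥ u i = u i ⬝ᵥ x := dotProduct_comm _ _
  rw [this]; ring

/-- Non-singularity of the noise-free Gram matrix (Proposition 1): if the sensors
`p₁, …, pₙ ∈ ℝ²` are all distinct from the source `p⁰` and do not all lie on one affine
line, then `I₂ - (1/n) ∑ᵢ (pᵢ - p⁰)(pᵢ - p⁰)ᵀ / ‖pᵢ - p⁰‖²` is positive definite,
in particular invertible. -/
theorem gram_matrix_posdef_of_noncollinear {n : ℕ} (hn : 0 < n)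
    (p0 : Fin 2 → ℝ) (p : Fin n → Fin 2 → ℝ) (hne : ∀ i, p i ≠ p0)
    (hline : ¬∃ (θ : Fin 2 → ℝ) (c : ℝ), θ ≠ 0 ∧ ∀ i, p i ⬝ᵥ θ = c) :
    ((1 : Matrix (Fin 2) (Fin 2) ℝ) -
        (n : ℝ)⁻¹ • ∑ i, ((p i - p0) ⬝ᵥ (p i - p0))⁻¹ •
          Matrix.vecMulVec (p i - p0) (p i - p0)).PosDef ∧
      IsUnit ((1 : Matrix (Fin 2) (Fin 2) ℝ) -
        (n : ℝ)⁻¹ • ∑ i, ((p i - p0) ⬝ᵥ (p i - p0))⁻¹ •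
          Matrix.vecMulVec (p i - p0) (p i - p0)).det := by
  set u : Fin n → Fin 2 → ℝ := fun i => p i - p0 with hu
  have hu0 : ∀ i, u i ≠ 0 := fun i => sub_ne_zero.mpr (hne i)
  have hupos : ∀ i, 0 < u i ⬝ᵥ u i := fun i => dotProduct_self_pos' (hu0 i)
  have hposdef : ((1 : Matrix (Fin 2) (Fin 2) ℝ) -
      (n : ℝ)⁻¹ • ∑ i, (u i ⬝ᵥ u i)⁻¹ • Matrix.vecMulVec (u i) (u i)).PosDef := by
    rw [Matrix.posDef_iff_dotProduct_mulVec]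
    constructor
    · -- Hermitian
      unfold Matrix.IsHermitian
      ext j k
      simp only [Matrix.conjTranspose_apply, Matrix.sub_apply, Matrix.one_apply,
        Matrix.smul_apply, Matrix.sum_apply, Matrix.vecMulVec_apply, smul_eq_mul, star_trivial]
      rw [eq_comm]
      congr 1
      · exact if_congr (by constructor <;> exact Eq.symm) rfl rfl
      · congr 1; refine Finset.sum_congr rfl fun i _ => ?_; ring
    · intro x hx
      have hxx : 0 < x ⬝ᵥ x := dotProduct_self_pos' hx
      have star_x : star x = x := by
        ext j; simp
      rw [star_x, quad_form_eval u x]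
      -- key bounds
      have hle : ∀ i : Fin n, (u i ⬝ᵥ u i)⁻¹ * (u i ⬝ᵥ x) ^ 2 ≤ x ⬝ᵥ x := by
        intro i
        rw [inv_mul_le_iff₀ (hupos i)]
        have key : (u i ⬝ᵥ x) ^ 2 + (u i 0 * x 1 - u i 1 * x 0) ^ 2
            = (u i ⬝ᵥ u i) * (x ⬝ᵥ x) := by
          simp only [dotProduct, Fin.sum_univ_two]; ring
        nlinarith [sq_nonneg (u i 0 * x 1 - u i 1 * x 0)]
      have hstrict : ∃ i : Fin n, (u i ⬝ᵥ u i)⁻¹ * (u i ⬝ᵥ x) ^ 2 < x ⬝ᵥ x := by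
        by_contra hcon
        push_neg at hcon
        have hcross : ∀ i, u i 0 * x 1 - u i 1 * x 0 = 0 := by
          intro i
          have h1 := hcon i
          have h2 := hle i
          have heq : (u i ⬝ᵥ u i)⁻¹ * (u i ⬝ᵥ x) ^ 2 = x ⬝ᵥ x := le_antisymm h2 h1
          have heq' : (u i ⬝ᵥ x) ^ 2 = (u i ⬝ᵥ u i) * (x ⬝ᵥ x) := by
            rw [inv_mul_eq_iff_eq_mul₀ (hupos i).ne'] at heq
            exact heq
          have key : (u i ⬝ᵥ x) ^ 2 + (u i 0 * x 1 - u i 1 * x 0) ^ 2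
              = (u i ⬝ᵥ u i) * (x ⬝ᵥ x) := by
            simp only [dotProduct, Fin.sum_univ_two]; ring
          have hz : (u i 0 * x 1 - u i 1 * x 0) ^ 2 = 0 := by linarith
          exact by nlinarith [hz, sq_nonneg (u i 0 * x 1 - u i 1 * x 0)]
        apply hline
        refine ⟨![x 1, -(x 0)], p0 ⬝ᵥ ![x 1, -(x 0)], ?_, ?_⟩
        · intro h0
          apply hx
          ext j
          have h1 : (![x 1, -(x 0)] : Fin 2 → ℝ) 0 = 0 := by rw [h0]; rfl
          have h2 : (![x 1, -(x 0)] : Fin 2 → ℝ) 1 = 0 := by rw [h0]; rfl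
          simp at h1 h2
          fin_cases j <;> simp [h1, h2]
        · intro i
          have : p i = u i + p0 := by simp [hu]
          rw [this, add_dotProduct]
          have : u i ⬝ᵥ ![x 1, -(x 0)] = 0 := by
            simp only [dotProduct, Fin.sum_univ_two]
            simpa [mul_comm, ← sub_eq_add_neg] using hcross i
          rw [this, zero_add]
      have hsum : ∑ i, (u i ⬝ᵥ u i)⁻¹ * (u i ⬝ᵥ x) ^ 2 < ∑ _i : Fin n, x ⬝ᵥ x := by
        obtain ⟨i0, hi0⟩ := hstrict
        exact Finset.sum_lt_sum (fun i _ => hle i) ⟨i0, Finset.mem_univ i0, hi0⟩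
      rw [Finset.sum_const, Finset.card_univ, Fintype.card_fin, nsmul_eq_mul] at hsum
      have hn' : (0:ℝ) < n := by exact_mod_cast hn
      have : (n : ℝ)⁻¹ * ∑ i, (u i ⬝ᵥ u i)⁻¹ * (u i ⬝ᵥ x) ^ 2 < x ⬝ᵥ x := by
        rw [inv_mul_lt_iff₀ hn']
        linarith
      linarith
  exact ⟨hposdef, hposdef.det_pos.ne'.isUnit⟩
end

section
/- Let μ be a probability measure on ℝ² and p⁰ ∈ ℝ². Assume there exists c > 0 such that ‖p − p⁰‖ ≥ c for μ-almost every p, and that μ(L) < 1 for every affine line L ⊂ ℝ². Then the 2×2 matrix ∫ (I₂ − (p − p⁰)(p − p⁰)ᵀ/‖p − p⁰‖²) dμ(p) is positive definite. -/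
open Matrix MeasureTheory

/-- Limiting non-singularity of the noise-free Gram matrix (Proposition 1): if the
sensor distribution `μ` on ℝ² keeps almost every sensor at distance at least `c > 0`
from the source `p⁰` and puts mass `< 1` on every affine line, then the matrix
`∫ (I₂ - (p - p⁰)(p - p⁰)ᵀ / ‖p - p⁰‖²) dμ(p)` (entrywise integral) is positive
definite. -/
theorem limiting_gram_matrix_posdef
    (μ : Measure (Fin 2 → ℝ)) [IsProbabilityMeasure μ] (p0 : Fin 2 → ℝ)
    (c : ℝ) (hc : 0 < c)
    (hfar : ∀ᵐ p ∂μ, c ≤ Real.sqrt ((p - p0) ⬝ᵥ (p - p0)))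
    (hline : ∀ (θ : Fin 2 → ℝ) (k : ℝ), θ ≠ 0 → μ {q | q ⬝ᵥ θ = k} < 1) :
    (Matrix.of fun i j : Fin 2 =>
        ∫ p, ((1 : Matrix (Fin 2) (Fin 2) ℝ) i j -
          (p i - p0 i) * (p j - p0 j) / ((p - p0) ⬝ᵥ (p - p0))) ∂μ).PosDef := by
  set f : Fin 2 → Fin 2 → (Fin 2 → ℝ) → ℝ := fun i j p =>
    (1 : Matrix (Fin 2) (Fin 2) ℝ) i j -
      (p i - p0 i) * (p j - p0 j) / ((p - p0) ⬝ᵥ (p - p0)) with hfdef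
  have hd : ∀ p : Fin 2 → ℝ,
      (p - p0) ⬝ᵥ (p - p0) = (p 0 - p0 0) ^ 2 + (p 1 - p0 1) ^ 2 := by
    intro p
    simp [dotProduct, Fin.sum_univ_two, sq, Pi.sub_apply]
  have hmeas : ∀ i j, Measurable (f i j) := by
    intro i j
    apply Measurable.sub measurable_const
    apply Measurable.div
    · exact ((measurable_pi_apply i).sub measurable_const).mul
        ((measurable_pi_apply j).sub measurable_const)
    · simp only [hd]
      exact (((measurable_pi_apply 0).sub measurable_const).pow_const 2).add
        (((measurable_pi_apply 1).sub measurable_const).pow_const 2)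
  have hquot : ∀ (i j : Fin 2) (p : Fin 2 → ℝ),
      |(p i - p0 i) * (p j - p0 j) / ((p - p0) ⬝ᵥ (p - p0))| ≤ 1 := by
    intro i j p
    rcases eq_or_lt_of_le (by positivity : (0:ℝ) ≤ (p 0 - p0 0) ^ 2 + (p 1 - p0 1) ^ 2) with h0 | h0
    · rw [hd p, ← h0, div_zero, abs_zero]; norm_num
    · rw [hd p, abs_div, abs_of_pos h0, div_le_one h0]
      have h1 : |p i - p0 i| ^ 2 ≤ (p 0 - p0 0) ^ 2 + (p 1 - p0 1) ^ 2 := by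
        fin_cases i <;> simp [sq_abs] <;>
          nlinarith [sq_nonneg (p 0 - p0 0), sq_nonneg (p 1 - p0 1)]
      have h2 : |p j - p0 j| ^ 2 ≤ (p 0 - p0 0) ^ 2 + (p 1 - p0 1) ^ 2 := by
        fin_cases j <;> simp [sq_abs] <;>
          nlinarith [sq_nonneg (p 0 - p0 0), sq_nonneg (p 1 - p0 1)]
      calc |(p i - p0 i) * (p j - p0 j)| = |p i - p0 i| * |p j - p0 j| := abs_mul _ _
        _ ≤ (p 0 - p0 0) ^ 2 + (p 1 - p0 1) ^ 2 := by
            nlinarith [abs_nonneg (p i - p0 i), abs_nonneg (p j - p0 j)]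
  have hint : ∀ i j, Integrable (f i j) μ := by
    intro i j
    refine (integrable_const (2:ℝ)).mono' (hmeas i j).aestronglyMeasurable
      (ae_of_all _ fun p => ?_)
    rw [Real.norm_eq_abs]
    have := hquot i j p
    have h1 : |(1 : Matrix (Fin 2) (Fin 2) ℝ) i j| ≤ 1 := by
      rcases eq_or_ne i j with h | h <;> simp [Matrix.one_apply, h]
    calc |f i j p| ≤ |(1 : Matrix (Fin 2) (Fin 2) ℝ) i j| +
          |(p i - p0 i) * (p j - p0 j) / ((p - p0) ⬝ᵥ (p - p0))| := abs_sub _ _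
      _ ≤ 2 := by linarith
  rw [Matrix.posDef_iff_dotProduct_mulVec]
  constructor
  · -- Hermitian
    ext i j
    simp only [Matrix.conjTranspose_apply, Matrix.of_apply, star_trivial]
    refine integral_congr_ae (ae_of_all _ fun p => ?_)
    rcases eq_or_ne i j with h | h
    · rw [h]
    · simp [hfdef, Matrix.one_apply, h, Ne.symm h, mul_comm]
  · intro x hx
    set g : (Fin 2 → ℝ) → ℝ := fun p =>
      x ⬝ᵥ x - ((p - p0) ⬝ᵥ x) ^ 2 / ((p - p0) ⬝ᵥ (p - p0)) with hgdef
    have hg_eq : ∀ p, g p =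
        x 0 * (f 0 0 p * x 0) + x 0 * (f 0 1 p * x 1) +
          (x 1 * (f 1 0 p * x 0) + x 1 * (f 1 1 p * x 1)) := by
      intro p
      simp only [hgdef, hfdef, dotProduct, Fin.sum_univ_two, Pi.sub_apply, Matrix.one_apply]
      norm_num
      rcases eq_or_ne ((p 0 - p0 0) * (p 0 - p0 0) + (p 1 - p0 1) * (p 1 - p0 1)) 0
        with h0 | h0
      · have ha0 : p 0 - p0 0 = 0 := by nlinarith [mul_self_nonneg (p 0 - p0 0), mul_self_nonneg (p 1 - p0 1)]
        have hb0 : p 1 - p0 1 = 0 := by nlinarith [mul_self_nonneg (p 0 - p0 0), mul_self_nonneg (p 1 - p0 1)]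
        rw [ha0, hb0]
        norm_num
      · field_simp
        ring
    have hg_nonneg : ∀ p, 0 ≤ g p := by
      intro p
      simp only [hgdef, dotProduct, Fin.sum_univ_two, Pi.sub_apply]
      rcases eq_or_lt_of_le
        (show (0:ℝ) ≤ (p 0 - p0 0) * (p 0 - p0 0) + (p 1 - p0 1) * (p 1 - p0 1) from
          add_nonneg (mul_self_nonneg _) (mul_self_nonneg _)) with h0 | h0
      · rw [← h0, div_zero]
        nlinarith [mul_self_nonneg (x 0), mul_self_nonneg (x 1)]
      · rw [sub_nonneg, div_le_iff₀ h0]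
        nlinarith [sq_nonneg ((p 0 - p0 0) * x 1 - (p 1 - p0 1) * x 0)]
    have I00 : Integrable (fun p => x 0 * (f 0 0 p * x 0)) μ :=
      ((hint 0 0).mul_const (x 0)).const_mul (x 0)
    have I01 : Integrable (fun p => x 0 * (f 0 1 p * x 1)) μ :=
      ((hint 0 1).mul_const (x 1)).const_mul (x 0)
    have I10 : Integrable (fun p => x 1 * (f 1 0 p * x 0)) μ :=
      ((hint 1 0).mul_const (x 0)).const_mul (x 1)
    have I11 : Integrable (fun p => x 1 * (f 1 1 p * x 1)) μ :=
      ((hint 1 1).mul_const (x 1)).const_mul (x 1)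
    have hg_int : Integrable g μ := by
      rw [show g = fun p => x 0 * (f 0 0 p * x 0) + x 0 * (f 0 1 p * x 1) +
          (x 1 * (f 1 0 p * x 0) + x 1 * (f 1 1 p * x 1)) from funext hg_eq]
      exact (I00.add I01).add (I10.add I11)
    have hform : dotProduct (star x)
        ((Matrix.of fun i j : Fin 2 => ∫ p, f i j p ∂μ) *ᵥ x) = ∫ p, g p ∂μ := by
      rw [show (fun p => g p) = fun p => x 0 * (f 0 0 p * x 0) + x 0 * (f 0 1 p * x 1) +
          (x 1 * (f 1 0 p * x 0) + x 1 * (f 1 1 p * x 1)) from funext hg_eq]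
      have IA : Integrable (fun p => x 0 * (f 0 0 p * x 0) + x 0 * (f 0 1 p * x 1)) μ :=
        I00.add I01
      have IB : Integrable (fun p => x 1 * (f 1 0 p * x 0) + x 1 * (f 1 1 p * x 1)) μ :=
        I10.add I11
      rw [integral_add IA IB, integral_add I00 I01, integral_add I10 I11]
      simp only [integral_const_mul, integral_mul_const]
      simp [Matrix.mulVec, dotProduct, Fin.sum_univ_two, Matrix.of_apply, star_trivial]
      ring
    rw [hform]
    rw [integral_pos_iff_support_of_nonneg hg_nonneg hg_int]
    by_contra hsupp
    push_neg at hsupp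
    have hsupp0 : μ (Function.support g) = 0 := le_antisymm hsupp zero_le
    have hg0 : ∀ᵐ p ∂μ, g p = 0 := by
      rw [ae_iff]
      exact hsupp0
    set θ : Fin 2 → ℝ := ![x 1, -(x 0)] with hθdef
    have hθ : θ ≠ 0 := by
      intro h
      apply hx
      funext i
      have h0 := congrFun h 0
      have h1 := congrFun h 1
      simp [hθdef] at h0 h1
      fin_cases i <;> simp [h0, h1]
    have hae : ∀ᵐ p ∂μ, p ⬝ᵥ θ = p0 ⬝ᵥ θ := by
      filter_upwards [hg0, hfar] with p hg hfarp
      have hdp := hd p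
      have hdpos : 0 < (p 0 - p0 0) ^ 2 + (p 1 - p0 1) ^ 2 := by
        have h1 : 0 < Real.sqrt ((p - p0) ⬝ᵥ (p - p0)) := lt_of_lt_of_le hc hfarp
        have := Real.sqrt_pos.mp h1
        rwa [hdp] at this
      have hgeq : x ⬝ᵥ x - ((p - p0) ⬝ᵥ x) ^ 2 / ((p - p0) ⬝ᵥ (p - p0)) = 0 := hg
      rw [hdp] at hgeq
      have hux : (p - p0) ⬝ᵥ x = (p 0 - p0 0) * x 0 + (p 1 - p0 1) * x 1 := by
        simp [dotProduct, Fin.sum_univ_two, Pi.sub_apply]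
      have hxx : x ⬝ᵥ x = x 0 ^ 2 + x 1 ^ 2 := by
        simp [dotProduct, Fin.sum_univ_two, sq]
      rw [hux, hxx, sub_eq_zero, eq_div_iff (ne_of_gt hdpos)] at hgeq
      have hsq : ((p 0 - p0 0) * x 1 - (p 1 - p0 1) * x 0) ^ 2 = 0 := by nlinarith
      have hzero : (p 0 - p0 0) * x 1 - (p 1 - p0 1) * x 0 = 0 := by
        exact sq_eq_zero_iff.mp hsq
      have hlin : p ⬝ᵥ θ - p0 ⬝ᵥ θ =
          (p 0 - p0 0) * x 1 - (p 1 - p0 1) * x 0 := by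
        simp [hθdef, dotProduct, Fin.sum_univ_two]
        ring
      linarith [hlin, hzero]
    have hms : MeasurableSet {q : Fin 2 → ℝ | q ⬝ᵥ θ = p0 ⬝ᵥ θ} := by
      apply measurableSet_eq_fun
      · simp only [dotProduct, Fin.sum_univ_two]
        exact ((measurable_pi_apply 0).mul measurable_const).add
          ((measurable_pi_apply 1).mul measurable_const)
      · exact measurable_const
    have h1 : μ {q : Fin 2 → ℝ | q ⬝ᵥ θ = p0 ⬝ᵥ θ} = 1 := by
      rw [← prob_compl_eq_zero_iff hms]
      rw [ae_iff] at hae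
      exact hae
    exact absurd h1 (ne_of_lt (hline θ (p0 ⬝ᵥ θ) hθ))
end

section
/- Let μ be a probability measure on ℝ² and p⁰ = (x⁰, y⁰) ∈ ℝ². Assume there exists c > 0 such that ‖p − p⁰‖ ≥ c for μ-almost every p, and that μ(L) < 1 for every affine line L ⊂ ℝ². For p = (x, y) define w(p) = (y − y⁰, −(x − x⁰)) ∈ ℝ². Then the 2×2 matrix M⁰ = ∫ w(p)·w(p)ᵀ/‖p − p⁰‖⁴ dμ(p) is positive definite (in particular non-singular). -/
open Matrix MeasureTheory

/-- Non-singularity of the asymptotic Fisher information matrix of the 2-D AOA model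
(Lemma 3): if the sensor distribution `μ` keeps almost every sensor at distance at
least `c > 0` from the source `p⁰ = (x⁰, y⁰)` and puts mass `< 1` on every affine line,
then, with `w(p) = (y - y⁰, -(x - x⁰))`, the matrix
`M⁰ = ∫ w(p) w(p)ᵀ / ‖p - p⁰‖⁴ dμ(p)` (entrywise integral) is positive definite, in
particular non-singular. -/
theorem fisher_information_posdef
    (μ : Measure (Fin 2 → ℝ)) [IsProbabilityMeasure μ] (p0 : Fin 2 → ℝ)
    (c : ℝ) (hc : 0 < c)
    (hfar : ∀ᵐ p ∂μ, c ≤ Real.sqrt ((p - p0) ⬝ᵥ (p - p0)))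
    (hline : ∀ (θ : Fin 2 → ℝ) (k : ℝ), θ ≠ 0 → μ {q | q ⬝ᵥ θ = k} < 1) :
    (Matrix.of fun i j : Fin 2 =>
        ∫ p, (![p 1 - p0 1, -(p 0 - p0 0)] i * ![p 1 - p0 1, -(p 0 - p0 0)] j) /
          ((p - p0) ⬝ᵥ (p - p0)) ^ 2 ∂μ).PosDef ∧
      IsUnit (Matrix.of fun i j : Fin 2 =>
        ∫ p, (![p 1 - p0 1, -(p 0 - p0 0)] i * ![p 1 - p0 1, -(p 0 - p0 0)] j) /
          ((p - p0) ⬝ᵥ (p - p0)) ^ 2 ∂μ).det := by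
  classical
  have hDform : ∀ p : Fin 2 → ℝ,
      (p - p0) ⬝ᵥ (p - p0) = (p 0 - p0 0) ^ 2 + (p 1 - p0 1) ^ 2 := by
    intro p
    simp [dotProduct, Fin.sum_univ_two]
    ring
  have hDnn : ∀ p : Fin 2 → ℝ, 0 ≤ (p - p0) ⬝ᵥ (p - p0) := by
    intro p; rw [hDform]; positivity
  have hae : ∀ᵐ p ∂μ, c ^ 2 ≤ (p - p0) ⬝ᵥ (p - p0) := by
    filter_upwards [hfar] with p hp
    have h1 : c ^ 2 ≤ Real.sqrt ((p - p0) ⬝ᵥ (p - p0)) ^ 2 :=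
      pow_le_pow_left₀ hc.le hp 2
    rwa [Real.sq_sqrt (hDnn p)] at h1
  have hWsq : ∀ (p : Fin 2 → ℝ) (i : Fin 2),
      (![p 1 - p0 1, -(p 0 - p0 0)] i) ^ 2 ≤ (p - p0) ⬝ᵥ (p - p0) := by
    intro p i
    rw [hDform]
    fin_cases i <;> simp <;> nlinarith [sq_nonneg (p 0 - p0 0), sq_nonneg (p 1 - p0 1)]
  have measW : ∀ i : Fin 2,
      Measurable fun p : Fin 2 → ℝ => ![p 1 - p0 1, -(p 0 - p0 0)] i := by
    intro i
    fin_cases i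
    · simp only [Matrix.cons_val_zero]
      exact (measurable_pi_apply 1).sub measurable_const
    · simp only [Matrix.cons_val_one, Matrix.head_cons]
      exact ((measurable_pi_apply 0).sub measurable_const).neg
  have measD : Measurable fun p : Fin 2 → ℝ => (p - p0) ⬝ᵥ (p - p0) := by
    simp only [hDform]
    exact (((measurable_pi_apply 0).sub measurable_const).pow_const 2).add
      (((measurable_pi_apply 1).sub measurable_const).pow_const 2)
  have measg : ∀ i j : Fin 2, Measurable fun p : Fin 2 → ℝ =>
      (![p 1 - p0 1, -(p 0 - p0 0)] i * ![p 1 - p0 1, -(p 0 - p0 0)] j) /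
        ((p - p0) ⬝ᵥ (p - p0)) ^ 2 :=
    fun i j => ((measW i).mul (measW j)).div (measD.pow_const 2)
  have hint : ∀ i j : Fin 2, Integrable (fun p : Fin 2 → ℝ =>
      (![p 1 - p0 1, -(p 0 - p0 0)] i * ![p 1 - p0 1, -(p 0 - p0 0)] j) /
        ((p - p0) ⬝ᵥ (p - p0)) ^ 2) μ := by
    intro i j
    refine Integrable.mono' (integrable_const ((c ^ 2)⁻¹))
      ((measg i j).aestronglyMeasurable) ?_
    filter_upwards [hae] with p hp
    have hc2 : (0:ℝ) < c ^ 2 := pow_pos hc 2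
    have hd0 : 0 < (p - p0) ⬝ᵥ (p - p0) := lt_of_lt_of_le hc2 hp
    set a := ![p 1 - p0 1, -(p 0 - p0 0)] i with ha'
    set b := ![p 1 - p0 1, -(p 0 - p0 0)] j with hb'
    set d := (p - p0) ⬝ᵥ (p - p0) with hd'
    have ha : a ^ 2 ≤ d := hWsq p i
    have hb : b ^ 2 ≤ d := hWsq p j
    have hab : |a * b| ≤ d := by
      nlinarith [abs_mul a b, sq_abs a, sq_abs b, sq_nonneg (|a| - |b|),
        abs_nonneg a, abs_nonneg b]
    rw [Real.norm_eq_abs, abs_div, abs_pow, abs_of_pos hd0, div_le_iff₀ (pow_pos hd0 2)]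
    have hinv : (c ^ 2)⁻¹ * c ^ 2 = 1 := inv_mul_cancel₀ hc2.ne'
    nlinarith [mul_nonneg (mul_nonneg hd0.le (inv_nonneg.mpr hc2.le)) (sub_nonneg.mpr hp)]
  -- quadratic form: pointwise identity
  have hFeq : ∀ x : Fin 2 → ℝ,
      (fun p : Fin 2 → ℝ =>
        (x 0 * (p 1 - p0 1) - x 1 * (p 0 - p0 0)) ^ 2 / ((p - p0) ⬝ᵥ (p - p0)) ^ 2)
      = fun p : Fin 2 → ℝ =>
        x 0 * x 0 * ((![p 1 - p0 1, -(p 0 - p0 0)] 0 * ![p 1 - p0 1, -(p 0 - p0 0)] 0) /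
            ((p - p0) ⬝ᵥ (p - p0)) ^ 2)
        + x 0 * x 1 * ((![p 1 - p0 1, -(p 0 - p0 0)] 0 * ![p 1 - p0 1, -(p 0 - p0 0)] 1) /
            ((p - p0) ⬝ᵥ (p - p0)) ^ 2)
        + x 1 * x 0 * ((![p 1 - p0 1, -(p 0 - p0 0)] 1 * ![p 1 - p0 1, -(p 0 - p0 0)] 0) /
            ((p - p0) ⬝ᵥ (p - p0)) ^ 2)
        + x 1 * x 1 * ((![p 1 - p0 1, -(p 0 - p0 0)] 1 * ![p 1 - p0 1, -(p 0 - p0 0)] 1) /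
            ((p - p0) ⬝ᵥ (p - p0)) ^ 2) := by
    intro x
    funext p
    simp only [Matrix.cons_val_zero, Matrix.cons_val_one, Matrix.head_cons]
    ring
  have hFint : ∀ x : Fin 2 → ℝ, Integrable (fun p : Fin 2 → ℝ =>
      (x 0 * (p 1 - p0 1) - x 1 * (p 0 - p0 0)) ^ 2 / ((p - p0) ⬝ᵥ (p - p0)) ^ 2) μ := by
    intro x
    rw [hFeq x]
    exact ((((hint 0 0).const_mul _).add ((hint 0 1).const_mul _)).add
      ((hint 1 0).const_mul _)).add ((hint 1 1).const_mul _)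
  -- positivity of the quadratic form integral
  have key : ∀ x : Fin 2 → ℝ, x ≠ 0 →
      0 < ∫ p, (x 0 * (p 1 - p0 1) - x 1 * (p 0 - p0 0)) ^ 2 /
        ((p - p0) ⬝ᵥ (p - p0)) ^ 2 ∂μ := by
    intro x hx
    set F : (Fin 2 → ℝ) → ℝ := fun p =>
      (x 0 * (p 1 - p0 1) - x 1 * (p 0 - p0 0)) ^ 2 / ((p - p0) ⬝ᵥ (p - p0)) ^ 2 with hF
    have hFnn : ∀ p, 0 ≤ F p := fun p => div_nonneg (sq_nonneg _) (sq_nonneg _)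
    rw [integral_pos_iff_support_of_nonneg hFnn (hFint x)]
    -- the line
    set θ : Fin 2 → ℝ := ![-(x 1), x 0] with hθ'
    have hθ : θ ≠ 0 := by
      intro h
      apply hx
      funext i
      have h0 := congrFun h 0
      have h1 := congrFun h 1
      simp [hθ'] at h0 h1
      fin_cases i <;> simpa
    set k : ℝ := p0 ⬝ᵥ θ with hk'
    have hnull : μ {p : Fin 2 → ℝ | (p - p0) ⬝ᵥ (p - p0) < c ^ 2} = 0 := by
      have h := ae_iff.mp hae
      simpa [not_le] using h
    have hsub : {p : Fin 2 → ℝ | F p = 0} ⊆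
        {q : Fin 2 → ℝ | q ⬝ᵥ θ = k} ∪ {p : Fin 2 → ℝ | (p - p0) ⬝ᵥ (p - p0) < c ^ 2} := by
      intro p hp
      by_cases hd : c ^ 2 ≤ (p - p0) ⬝ᵥ (p - p0)
      · left
        have hd0 : (0:ℝ) < (p - p0) ⬝ᵥ (p - p0) := lt_of_lt_of_le (pow_pos hc 2) hd
        have hS : x 0 * (p 1 - p0 1) - x 1 * (p 0 - p0 0) = 0 := by
          have := hp
          simp only [hF, Set.mem_setOf_eq, div_eq_zero_iff] at this
          rcases this with h | h
          · exact (pow_eq_zero_iff two_ne_zero).mp h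
          · exact absurd h (pow_ne_zero 2 hd0.ne').elim
        show p ⬝ᵥ θ = k
        simp only [hk', hθ', dotProduct, Fin.sum_univ_two, Matrix.cons_val_zero,
          Matrix.cons_val_one, Matrix.head_cons]
        linarith [hS]
      · right
        exact not_le.mp hd
    have hcompl : μ {p : Fin 2 → ℝ | F p = 0} < 1 := by
      calc μ {p : Fin 2 → ℝ | F p = 0}
          ≤ μ ({q : Fin 2 → ℝ | q ⬝ᵥ θ = k} ∪
              {p : Fin 2 → ℝ | (p - p0) ⬝ᵥ (p - p0) < c ^ 2}) := measure_mono hsub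
        _ ≤ μ {q : Fin 2 → ℝ | q ⬝ᵥ θ = k} +
              μ {p : Fin 2 → ℝ | (p - p0) ⬝ᵥ (p - p0) < c ^ 2} := measure_union_le _ _
        _ = μ {q : Fin 2 → ℝ | q ⬝ᵥ θ = k} := by rw [hnull, add_zero]
        _ < 1 := hline θ k hθ
    by_contra h
    have h0 : μ (Function.support F) = 0 := by
      simpa using (nonpos_iff_eq_zero.mp (not_lt.mp h))
    have hcup : (Function.support F)ᶜ = {p : Fin 2 → ℝ | F p = 0} := by
      ext p; simp [Function.support]
    have : (1:ENNReal) ≤ μ (Function.support F) + μ (Function.support F)ᶜ := by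
      calc (1:ENNReal) = μ Set.univ := measure_univ.symm
        _ = μ (Function.support F ∪ (Function.support F)ᶜ) := by
            rw [Set.union_compl_self]
        _ ≤ _ := measure_union_le _ _
    rw [h0, zero_add, hcup] at this
    exact absurd (lt_of_le_of_lt this hcompl) (lt_irrefl _)
  -- assemble
  have hposdef : (Matrix.of fun i j : Fin 2 =>
      ∫ p, (![p 1 - p0 1, -(p 0 - p0 0)] i * ![p 1 - p0 1, -(p 0 - p0 0)] j) /
        ((p - p0) ⬝ᵥ (p - p0)) ^ 2 ∂μ).PosDef := by
    rw [posDef_iff_dotProduct_mulVec]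
    constructor
    · -- Hermitian
      ext i j
      simp only [conjTranspose_apply, Matrix.of_apply, star_trivial, RCLike.star_def,
        starRingEnd_apply]
      congr 1
      funext p
      ring
    · intro x hx
      have hq : star x ⬝ᵥ ((Matrix.of fun i j : Fin 2 =>
          ∫ p, (![p 1 - p0 1, -(p 0 - p0 0)] i * ![p 1 - p0 1, -(p 0 - p0 0)] j) /
            ((p - p0) ⬝ᵥ (p - p0)) ^ 2 ∂μ) *ᵥ x)
          = ∫ p, (x 0 * (p 1 - p0 1) - x 1 * (p 0 - p0 0)) ^ 2 /
              ((p - p0) ⬝ᵥ (p - p0)) ^ 2 ∂μ := by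
        rw [hFeq x]
        rw [integral_add, integral_add, integral_add, integral_const_mul,
            integral_const_mul, integral_const_mul, integral_const_mul]
        · simp only [Matrix.mulVec, dotProduct, Fin.sum_univ_two, Matrix.of_apply,
            Pi.star_apply, star_trivial]
          ring
        · exact (hint 0 0).const_mul _
        · exact (hint 0 1).const_mul _
        · exact ((hint 0 0).const_mul _).add ((hint 0 1).const_mul _)
        · exact (hint 1 0).const_mul _
        · exact (((hint 0 0).const_mul _).add ((hint 0 1).const_mul _)).add
            ((hint 1 0).const_mul _)
        · exact (hint 1 1).const_mul _
      rw [hq]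
      exact key x hx
  refine ⟨hposdef, ?_⟩
  exact isUnit_iff_ne_zero.mpr (ne_of_gt hposdef.det_pos)
end

section
/- Let μ be a probability measure on ℝ², and let p = (x, y) and p⁰ = (x⁰, y⁰) be two distinct points of ℝ². Assume that for μ-almost every p̃ = (x̃, ỹ) both x̃ ≠ x and x̃ ≠ x⁰, and that μ(L) < 1 for every affine line L ⊂ ℝ². Then ∫ (arctan((ỹ − y)/(x̃ − x)) − arctan((ỹ − y⁰)/(x̃ − x⁰)))² dμ(p̃) > 0. -/
open Matrix MeasureTheory

/-- Asymptotic identifiability of the 2-D AOA model (Lemma 1): if `p ≠ p⁰`, almost every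
sensor `p̃` (w.r.t. the limiting sensor distribution `μ`) has first coordinate different
from those of `p` and `p⁰`, and `μ` puts mass `< 1` on every affine line, then the
limiting least-squares criterion separates `p` from `p⁰`:
`∫ (arctan((ỹ-y)/(x̃-x)) - arctan((ỹ-y⁰)/(x̃-x⁰)))² dμ(p̃) > 0`. -/
theorem aoa_identifiability_2d
    (μ : Measure (Fin 2 → ℝ)) [IsProbabilityMeasure μ]
    (p p0 : Fin 2 → ℝ) (hne : p ≠ p0)
    (hx : ∀ᵐ pt ∂μ, pt 0 ≠ p 0 ∧ pt 0 ≠ p0 0)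
    (hline : ∀ (θ : Fin 2 → ℝ) (k : ℝ), θ ≠ 0 → μ {q | q ⬝ᵥ θ = k} < 1) :
    0 < ∫ pt, (Real.arctan ((pt 1 - p 1) / (pt 0 - p 0)) -
        Real.arctan ((pt 1 - p0 1) / (pt 0 - p0 0))) ^ 2 ∂μ := by
  set f : (Fin 2 → ℝ) → ℝ := fun pt =>
    (Real.arctan ((pt 1 - p 1) / (pt 0 - p 0)) -
        Real.arctan ((pt 1 - p0 1) / (pt 0 - p0 0))) ^ 2 with hf
  have hmeas : Measurable f := by
    apply Measurable.pow _ measurable_const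
    apply Measurable.sub
    · exact Real.continuous_arctan.measurable.comp
        (((measurable_pi_apply 1).sub measurable_const).div
          ((measurable_pi_apply 0).sub measurable_const))
    · exact Real.continuous_arctan.measurable.comp
        (((measurable_pi_apply 1).sub measurable_const).div
          ((measurable_pi_apply 0).sub measurable_const))
  have hnonneg : ∀ pt, 0 ≤ f pt := fun pt => sq_nonneg _
  have hbound : ∀ pt, |f pt| ≤ Real.pi ^ 2 := by
    intro pt
    rw [abs_of_nonneg (hnonneg pt)]
    apply sq_le_sq'
    · have h1 := Real.neg_pi_div_two_lt_arctan ((pt 1 - p 1) / (pt 0 - p 0))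
      have h2 := Real.arctan_lt_pi_div_two ((pt 1 - p0 1) / (pt 0 - p0 0))
      nlinarith [Real.pi_pos]
    · have h1 := Real.arctan_lt_pi_div_two ((pt 1 - p 1) / (pt 0 - p 0))
      have h2 := Real.neg_pi_div_two_lt_arctan ((pt 1 - p0 1) / (pt 0 - p0 0))
      nlinarith [Real.pi_pos]
  have hint : Integrable f μ :=
    (integrable_const (Real.pi ^ 2)).mono' hmeas.aestronglyMeasurable
      (ae_of_all _ hbound)
  rcases lt_or_eq_of_le (integral_nonneg (f := f) hnonneg) with h | h
  · exact h
  exfalso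
  have hzero : f =ᵐ[μ] 0 :=
    (integral_eq_zero_iff_of_nonneg hnonneg hint).mp h.symm
  set θ : Fin 2 → ℝ := ![p0 1 - p 1, p 0 - p0 0] with hθdef
  have hθ : θ ≠ 0 := by
    intro h0
    apply hne
    have h00 : θ 0 = 0 := by rw [h0]; rfl
    have h01 : θ 1 = 0 := by rw [h0]; rfl
    simp only [hθdef, Matrix.cons_val_zero, Matrix.cons_val_one, Matrix.head_cons] at h00 h01
    funext i
    fin_cases i
    · show p 0 = p0 0; linarith
    · show p 1 = p0 1; linarith
  set k : ℝ := p 0 * (p0 1) - p0 0 * (p 1) with hkdef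
  have hae : ∀ᵐ pt ∂μ, pt ∈ {q : Fin 2 → ℝ | q ⬝ᵥ θ = k} := by
    filter_upwards [hx, hzero] with pt hxpt hfpt
    have hfpt' : f pt = 0 := hfpt
    have harctan : Real.arctan ((pt 1 - p 1) / (pt 0 - p 0)) =
        Real.arctan ((pt 1 - p0 1) / (pt 0 - p0 0)) := by
      have := sq_eq_zero_iff.mp hfpt'
      linarith [sub_eq_zero.mp this]
    have heq : (pt 1 - p 1) / (pt 0 - p 0) = (pt 1 - p0 1) / (pt 0 - p0 0) :=
      Real.arctan_injective harctan
    have hd1 : pt 0 - p 0 ≠ 0 := sub_ne_zero.mpr hxpt.1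
    have hd2 : pt 0 - p0 0 ≠ 0 := sub_ne_zero.mpr hxpt.2
    have hcross : (pt 1 - p 1) * (pt 0 - p0 0) = (pt 1 - p0 1) * (pt 0 - p 0) :=
      (div_eq_div_iff hd1 hd2).mp heq
    show pt ⬝ᵥ θ = k
    simp only [hθdef, hkdef, dotProduct, Fin.sum_univ_two,
      Matrix.cons_val_zero, Matrix.cons_val_one, Matrix.head_cons]
    nlinarith [hcross]
  have hS : MeasurableSet {q : Fin 2 → ℝ | q ⬝ᵥ θ = k} := by
    apply measurableSet_eq_fun _ measurable_const
    exact Finset.measurable_sum _ fun i _ => (measurable_pi_apply i).mul measurable_const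
  have hone : μ {q : Fin 2 → ℝ | q ⬝ᵥ θ = k} = 1 := by
    rw [← prob_compl_eq_zero_iff hS]
    rw [Filter.eventually_iff, mem_ae_iff] at hae
    simpa using hae
  exact absurd hone (hline θ k hθ).ne
end

section
/- Let μ be a probability measure on ℝ³, let σ_a > 0 and σ_e > 0, and let p = (x, y, z) and p⁰ = (x⁰, y⁰, z⁰) be two distinct points of ℝ³. Assume that for μ-almost every p̃ = (x̃, ỹ, z̃): x̃ ≠ x, x̃ ≠ x⁰, (x̃, ỹ) ≠ (x, y), and (x̃, ỹ) ≠ (x⁰, y⁰); and assume that for every affine line L ⊂ ℝ², μ({p̃ : (x̃, ỹ) ∈ L}) < 1. Then σ_a⁻²·∫ (arctan((ỹ − y)/(x̃ − x)) − arctan((ỹ − y⁰)/(x̃ − x⁰)))² dμ(p̃) + σ_e⁻²·∫ (arctan((z̃ − z)/√((x̃ − x)² + (ỹ − y)²)) − arctan((z̃ − z⁰)/√((x̃ − x⁰)² + (ỹ − y⁰)²)))² dμ(p̃) > 0. -/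
open MeasureTheory

/-- Asymptotic identifiability of the 3-D AOA model (Lemma 5(i)): if `p ≠ p⁰` in ℝ³,
almost every sensor `p̃ = (x̃, ỹ, z̃)` (w.r.t. the limiting sensor distribution `μ`)
satisfies `x̃ ≠ x`, `x̃ ≠ x⁰`, `(x̃, ỹ) ≠ (x, y)`, `(x̃, ỹ) ≠ (x⁰, y⁰)`, and the
projection of `μ` onto the first two coordinates puts mass `< 1` on every affine line,
then the limiting weighted least-squares criterion (azimuth noise variance `σ_a²`,
elevation noise variance `σ_e²`) separates `p` from `p⁰`. -/
theorem aoa_identifiability_3d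
    (μ : Measure (Fin 3 → ℝ)) [IsProbabilityMeasure μ]
    (σa σe : ℝ) (hσa : 0 < σa) (hσe : 0 < σe)
    (p p0 : Fin 3 → ℝ) (hne : p ≠ p0)
    (hx : ∀ᵐ pt ∂μ, pt 0 ≠ p 0 ∧ pt 0 ≠ p0 0 ∧
      (pt 0, pt 1) ≠ (p 0, p 1) ∧ (pt 0, pt 1) ≠ (p0 0, p0 1))
    (hline : ∀ (θ : Fin 2 → ℝ) (k : ℝ), θ ≠ 0 →
      μ {pt | pt 0 * θ 0 + pt 1 * θ 1 = k} < 1) :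
    0 < (σa ^ 2)⁻¹ * ∫ pt, (Real.arctan ((pt 1 - p 1) / (pt 0 - p 0)) -
          Real.arctan ((pt 1 - p0 1) / (pt 0 - p0 0))) ^ 2 ∂μ +
        (σe ^ 2)⁻¹ * ∫ pt,
          (Real.arctan ((pt 2 - p 2) /
              Real.sqrt ((pt 0 - p 0) ^ 2 + (pt 1 - p 1) ^ 2)) -
            Real.arctan ((pt 2 - p0 2) /
              Real.sqrt ((pt 0 - p0 0) ^ 2 + (pt 1 - p0 1) ^ 2))) ^ 2 ∂μ := by
  set F : (Fin 3 → ℝ) → ℝ := fun pt =>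
    Real.arctan ((pt 1 - p 1) / (pt 0 - p 0)) -
      Real.arctan ((pt 1 - p0 1) / (pt 0 - p0 0)) with hF
  set G : (Fin 3 → ℝ) → ℝ := fun pt =>
    Real.arctan ((pt 2 - p 2) / Real.sqrt ((pt 0 - p 0) ^ 2 + (pt 1 - p 1) ^ 2)) -
      Real.arctan ((pt 2 - p0 2) /
        Real.sqrt ((pt 0 - p0 0) ^ 2 + (pt 1 - p0 1) ^ 2)) with hG
  have m0 : Measurable fun pt : Fin 3 → ℝ => pt 0 := measurable_pi_apply 0
  have m1 : Measurable fun pt : Fin 3 → ℝ => pt 1 := measurable_pi_apply 1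
  have m2 : Measurable fun pt : Fin 3 → ℝ => pt 2 := measurable_pi_apply 2
  have hFm : Measurable F := by
    apply Measurable.sub <;>
      exact Real.measurable_arctan.comp
        (((measurable_pi_apply 1).sub measurable_const).div
          ((measurable_pi_apply 0).sub measurable_const))
  have hGm : Measurable G := by
    apply Measurable.sub <;>
      exact Real.measurable_arctan.comp
        (((measurable_pi_apply 2).sub measurable_const).div
          (Real.continuous_sqrt.measurable.comp
            ((((measurable_pi_apply 0).sub measurable_const).pow_const 2).add
              (((measurable_pi_apply 1).sub measurable_const).pow_const 2))))
  have hbound : ∀ (H : (Fin 3 → ℝ) → ℝ), Measurable H →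
      (∀ pt, |H pt| ≤ Real.pi) → Integrable (fun pt => H pt ^ 2) μ := by
    intro H hHm hHb
    refine ⟨(hHm.pow_const 2).aestronglyMeasurable,
      HasFiniteIntegral.of_bounded (C := Real.pi ^ 2) (ae_of_all _ fun pt => ?_)⟩
    rw [Real.norm_eq_abs, abs_pow]
    exact pow_le_pow_left₀ (abs_nonneg _) (hHb pt) 2
  have harctan_abs : ∀ a b : ℝ, |Real.arctan a - Real.arctan b| ≤ Real.pi := by
    intro a b
    have h1 := Real.arctan_lt_pi_div_two a
    have h2 := Real.neg_pi_div_two_lt_arctan a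
    have h3 := Real.arctan_lt_pi_div_two b
    have h4 := Real.neg_pi_div_two_lt_arctan b
    rw [abs_le]; constructor <;> linarith
  have hFint : Integrable (fun pt => F pt ^ 2) μ := hbound F hFm fun pt => harctan_abs _ _
  have hGint : Integrable (fun pt => G pt ^ 2) μ := hbound G hGm fun pt => harctan_abs _ _
  have hFnn : 0 ≤ ∫ pt, F pt ^ 2 ∂μ := integral_nonneg fun pt => sq_nonneg _
  have hGnn : 0 ≤ ∫ pt, G pt ^ 2 ∂μ := integral_nonneg fun pt => sq_nonneg _
  by_contra hcon
  push_neg at hcon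
  have ha : 0 < (σa ^ 2)⁻¹ := by positivity
  have he : 0 < (σe ^ 2)⁻¹ := by positivity
  have hFzero : ∫ pt, F pt ^ 2 ∂μ = 0 := by nlinarith [mul_nonneg ha.le hFnn, mul_nonneg he.le hGnn]
  have hGzero : ∫ pt, G pt ^ 2 ∂μ = 0 := by nlinarith [mul_nonneg ha.le hFnn, mul_nonneg he.le hGnn]
  have hFae : ∀ᵐ pt ∂μ, F pt = 0 := by
    have := (integral_eq_zero_iff_of_nonneg (fun pt => sq_nonneg (F pt)) hFint).mp hFzero
    filter_upwards [this] with pt h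
    exact pow_eq_zero_iff (n := 2) (by norm_num) |>.mp h
  have hGae : ∀ᵐ pt ∂μ, G pt = 0 := by
    have := (integral_eq_zero_iff_of_nonneg (fun pt => sq_nonneg (G pt)) hGint).mp hGzero
    filter_upwards [this] with pt h
    exact pow_eq_zero_iff (n := 2) (by norm_num) |>.mp h
  by_cases hxy : p 0 = p0 0 ∧ p 1 = p0 1
  · -- elevation case: p 2 ≠ p0 2, derive a.e. contradiction
    have hz : p 2 ≠ p0 2 := by
      intro h2; apply hne; funext i; fin_cases i
      · exact hxy.1
      · exact hxy.2
      · exact h2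
    have : ∀ᵐ pt ∂μ, False := by
      filter_upwards [hx, hGae] with pt hpt hg
      obtain ⟨-, -, hp, -⟩ := hpt
      have hr : 0 < Real.sqrt ((pt 0 - p 0) ^ 2 + (pt 1 - p 1) ^ 2) := by
        apply Real.sqrt_pos.mpr
        rcases (fun h => hp (Prod.ext (by linarith [h.1]) (by linarith [h.2])) :
            ¬(pt 0 - p 0 = 0 ∧ pt 1 - p 1 = 0)) with h
        rcases eq_or_ne (pt 0 - p 0) 0 with h0 | h0
        · have h1 : pt 1 - p 1 ≠ 0 := fun h1 => h ⟨h0, h1⟩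
          positivity
        · positivity
      have heq : (pt 2 - p 2) / Real.sqrt ((pt 0 - p 0) ^ 2 + (pt 1 - p 1) ^ 2) =
          (pt 2 - p0 2) / Real.sqrt ((pt 0 - p0 0) ^ 2 + (pt 1 - p0 1) ^ 2) :=
        Real.arctan_injective (by simpa [hG, sub_eq_zero] using hg)
      rw [← hxy.1, ← hxy.2] at heq
      rw [div_eq_div_iff (ne_of_gt hr) (ne_of_gt hr)] at heq
      have hr2 : Real.sqrt ((pt 0 - p 0) ^ 2 + (pt 1 - p 1) ^ 2) ≠ 0 := ne_of_gt hr
      exact hz (by nlinarith [heq])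
    rcases this.exists with ⟨_, h⟩
    exact h
  · -- azimuth case: line with θ = (p0 1 - p 1, p 0 - p0 0)
    set θ : Fin 2 → ℝ := ![p0 1 - p 1, p 0 - p0 0] with hθ
    have hθne : θ ≠ 0 := by
      intro h
      have h0 : θ 0 = 0 := by rw [h]; rfl
      have h1 : θ 1 = 0 := by rw [h]; rfl
      simp [hθ] at h0 h1
      exact hxy ⟨by linarith, by linarith⟩
    set k : ℝ := p 0 * (p0 1 - p 1) + p 1 * (p 0 - p0 0) with hk
    have hae : ∀ᵐ pt ∂μ, pt ∈ {pt : Fin 3 → ℝ | pt 0 * θ 0 + pt 1 * θ 1 = k} := by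
      filter_upwards [hx, hFae] with pt hpt hf
      obtain ⟨h0, h00, -, -⟩ := hpt
      have heq : (pt 1 - p 1) / (pt 0 - p 0) = (pt 1 - p0 1) / (pt 0 - p0 0) :=
        Real.arctan_injective (by simpa [hF, sub_eq_zero] using hf)
      rw [div_eq_div_iff (sub_ne_zero.mpr h0) (sub_ne_zero.mpr h00)] at heq
      show pt 0 * θ 0 + pt 1 * θ 1 = k
      simp only [hθ, hk, Matrix.cons_val_zero, Matrix.cons_val_one, Matrix.head_cons]
      nlinarith [heq]
    have hmeas : MeasurableSet {pt : Fin 3 → ℝ | pt 0 * θ 0 + pt 1 * θ 1 = k} :=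
      measurableSet_eq_fun ((m0.mul_const _).add (m1.mul_const _)) measurable_const
    have : μ {pt : Fin 3 → ℝ | pt 0 * θ 0 + pt 1 * θ 1 = k} = 1 := by
      rw [← prob_compl_eq_zero_iff hmeas]
      simpa [ae_iff, Set.compl_setOf] using hae
    exact absurd this (hline θ k hθne).ne
end
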